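/- For δ > 0 and x ∈ R^d with x ∉ Z^d, the Bochner–Riesz kernel B_N^{d,δ}(x) = Σ_{k ∈ Z^d} (1 − |k|²/N²)_+^δ e^{2πi⟨k,x⟩} satisfies |B_N^{d,δ}(x)| ≤ C(x,d,δ) N^{d-1} for all N ≥ 1, where C(x,d,δ) does not depend on N. -/

import Mathlib

open Real

/-- The Bochner–Riesz kernel
`B_N^{d,δ}(x) = ∑_{k ∈ ℤ^d} (1 − |k|²/N²)_+^δ e^{2πi⟨k,x⟩}` (the sum is supported on
lattice points with `|k| ≤ N`). -/
noncomputable def bochnerRieszKernel (d : ℕ) (δ : ℝ) (N : ℕ) (x : Fin d → ℝ) : ℂ :=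
  ∑ k ∈ (Fintype.piFinset fun _ : Fin d => Finset.Icc (-(N : ℤ)) (N : ℤ)).filter
      (fun k => ∑ i, (k i) ^ 2 ≤ (N : ℤ) ^ 2),
    (((1 - (∑ i, ((k i : ℝ)) ^ 2) / (N : ℝ) ^ 2) ^ δ : ℝ) : ℂ) *
      Complex.exp (2 * (π : ℂ) * Complex.I * (∑ i, (k i : ℝ) * x i))

section Aux
open Finset

-- geometric partial sums bound
lemma geom_partial_bound (z : ℂ) (hz1 : ‖z‖ = 1) (hz : z ≠ 1) (j : ℕ) :
    ‖∑ n ∈ range j, z ^ n‖ ≤ 2 / ‖z - 1‖ := by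
  have hpos : 0 < ‖z - 1‖ := by
    rw [norm_pos_iff]; exact sub_ne_zero.mpr hz
  rw [geom_sum_eq hz, norm_div]
  rw [div_le_div_iff₀ hpos hpos]
  have : ‖z ^ j - 1‖ ≤ 2 := by
    calc ‖z ^ j - 1‖ ≤ ‖z ^ j‖ + ‖(1 : ℂ)‖ := norm_sub_le _ _
      _ = 2 := by rw [norm_pow, hz1]; norm_num
  nlinarith [norm_nonneg (z-1)]

-- Abel summation bound
lemma abel_bound (a : ℕ → ℝ) (ha : Antitone a) (ha0 : ∀ n, 0 ≤ a n)
    (g : ℕ → ℂ) (c : ℝ) (hc : ∀ j, ‖∑ n ∈ range j, g n‖ ≤ c) (m : ℕ) :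
    ‖∑ n ∈ range m, a n • g n‖ ≤ a 0 * c := by
  have hc0 : 0 ≤ c := by simpa using hc 0
  cases' m with m
  · simpa using mul_nonneg (ha0 0) hc0
  rw [Finset.sum_range_by_parts]
  have h1 : ‖a (m + 1 - 1) • ∑ i ∈ range (m+1), g i‖ ≤ a m * c := by
    simp only [Nat.add_sub_cancel, norm_smul, Real.norm_eq_abs, abs_of_nonneg (ha0 m)]
    exact mul_le_mul_of_nonneg_left (hc _) (ha0 m)
  have h2 : ‖∑ i ∈ range (m + 1 - 1), (a (i+1) - a i) • ∑ j ∈ range (i+1), g j‖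
      ≤ (a 0 - a m) * c := by
    refine le_trans (norm_sum_le _ _) ?_
    have : ∀ i ∈ range m, ‖(a (i+1) - a i) • ∑ j ∈ range (i+1), g j‖
        ≤ (a i - a (i+1)) * c := by
      intro i _
      rw [norm_smul, Real.norm_eq_abs, abs_of_nonpos (by linarith [ha (Nat.le_succ i)])]
      have := ha (Nat.le_succ i)
      rw [neg_sub]
      exact mul_le_mul (le_refl _) (hc _) (norm_nonneg _) (by linarith)
    simp only [Nat.add_sub_cancel]
    refine le_trans (Finset.sum_le_sum this) ?_
    rw [← Finset.sum_mul]
    have : ∑ i ∈ range m, (a i - a (i+1)) = a 0 - a m := by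
      exact Finset.sum_range_sub' a m
    rw [this]
  calc ‖_ - _‖ ≤ _ := norm_sub_le _ _
    _ ≤ a m * c + (a 0 - a m) * c := add_le_add h1 h2
    _ = a 0 * c := by ring

lemma icc_cast_image (M : ℕ) :
    Finset.Icc (0:ℤ) M = (range (M+1)).image (fun j : ℕ => (j : ℤ)) := by
  ext n
  simp only [Finset.mem_Icc, Finset.mem_image, Finset.mem_range]
  constructor
  · rintro ⟨h1, h2⟩; exact ⟨n.toNat, by omega, by omega⟩
  · rintro ⟨j, hj, rfl⟩; omega

lemma ico_neg_image (M : ℕ) :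
    Finset.Ico (-(M:ℤ)) 0 = (range M).image (fun j : ℕ => -(j : ℤ) - 1) := by
  ext n
  simp only [Finset.mem_Ico, Finset.mem_image, Finset.mem_range]
  constructor
  · rintro ⟨h1, h2⟩; exact ⟨(-n-1).toNat, by omega, by omega⟩
  · rintro ⟨j, hj, rfl⟩; omega

lemma symm_sum_bound (z : ℂ) (hz1 : ‖z‖ = 1) (hz : z ≠ 1) (a : ℕ → ℝ)
    (ha : Antitone a) (ha0 : ∀ n, 0 ≤ a n) (ha1 : a 0 ≤ 1) (M : ℕ) :
    ‖∑ n ∈ Finset.Icc (-(M:ℤ)) (M:ℤ), (a n.natAbs : ℂ) * z ^ n‖ ≤ 4 / ‖z - 1‖ := by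
  have hpos : 0 < ‖z - 1‖ := by rw [norm_pos_iff]; exact sub_ne_zero.mpr hz
  set c : ℝ := 2 / ‖z - 1‖ with hc
  have hcnn : 0 ≤ c := by positivity
  have hzinv1 : ‖z⁻¹‖ = 1 := by rw [norm_inv, hz1]; norm_num
  have hzinv : z⁻¹ ≠ 1 := by
    intro h
    exact hz (by rw [← inv_inv z, h, inv_one])
  have hconj : ‖z⁻¹ - 1‖ = ‖z - 1‖ := by
    rw [RCLike.inv_eq_conj hz1]
    rw [show ((starRingEnd ℂ) z - 1 : ℂ) = (starRingEnd ℂ) (z - 1) by rw [map_sub, map_one]]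
    exact RCLike.norm_conj _
  have hsplit : Finset.Icc (-(M:ℤ)) (M:ℤ) = Finset.Ico (-(M:ℤ)) 0 ∪ Finset.Icc (0:ℤ) M := by
    ext n; simp only [Finset.mem_Icc, Finset.mem_union, Finset.mem_Ico]; omega
  have hdisj : Disjoint (Finset.Ico (-(M:ℤ)) 0) (Finset.Icc (0:ℤ) M) := by
    rw [Finset.disjoint_left]; intro n h1 h2
    simp only [Finset.mem_Ico, Finset.mem_Icc] at h1 h2; omega
  rw [hsplit, Finset.sum_union hdisj]
  have hpos_part : ‖∑ n ∈ Finset.Icc (0:ℤ) (M:ℤ), (a n.natAbs : ℂ) * z ^ n‖ ≤ c := by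
    rw [icc_cast_image, Finset.sum_image (by intro a _ b _ h; beta_reduce at h; exact_mod_cast h)]
    have : ∀ j ∈ range (M+1), (a (j : ℤ).natAbs : ℂ) * z ^ (j : ℤ) = a j • z ^ j := by
      intro j _
      rw [Int.natAbs_natCast, zpow_natCast, Complex.real_smul]
    rw [Finset.sum_congr rfl this]
    calc ‖∑ j ∈ range (M+1), a j • z ^ j‖ ≤ a 0 * c :=
          abel_bound a ha ha0 _ c (fun j => geom_partial_bound z hz1 hz j) _
      _ ≤ 1 * c := mul_le_mul_of_nonneg_right ha1 hcnn
      _ = c := one_mul c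
  have hneg_part : ‖∑ n ∈ Finset.Ico (-(M:ℤ)) 0, (a n.natAbs : ℂ) * z ^ n‖ ≤ c := by
    rw [ico_neg_image, Finset.sum_image (by intro a _ b _ h; beta_reduce at h; omega)]
    have : ∀ j ∈ range M, (a (-(j:ℤ) - 1).natAbs : ℂ) * z ^ (-(j:ℤ) - 1)
        = z⁻¹ * ((fun j => a (j+1)) j • (z⁻¹) ^ j) := by
      intro j _
      have h1 : (-(j:ℤ) - 1).natAbs = j + 1 := by omega
      have h2 : z ^ (-(j:ℤ) - 1) = z⁻¹ * (z⁻¹) ^ j := by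
        rw [show (-(j:ℤ) - 1) = -((j:ℤ) + 1) by ring, zpow_neg]
        rw [show ((j:ℤ) + 1) = ((j+1 : ℕ) : ℤ) by push_cast; ring, zpow_natCast]
        rw [pow_succ, mul_inv, inv_pow, mul_comm]
      rw [h1, h2, Complex.real_smul]; ring
    rw [Finset.sum_congr rfl this, ← Finset.mul_sum]
    rw [norm_mul, hzinv1, one_mul]
    have hgeo : ∀ j, ‖∑ n ∈ range j, (z⁻¹) ^ n‖ ≤ c := by
      intro j
      calc ‖∑ n ∈ range j, (z⁻¹) ^ n‖ ≤ 2 / ‖z⁻¹ - 1‖ :=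
            geom_partial_bound z⁻¹ hzinv1 hzinv j
        _ = c := by rw [hconj]
    calc ‖∑ j ∈ range M, (fun j => a (j+1)) j • (z⁻¹) ^ j‖ ≤ a 1 * c :=
          abel_bound _ (fun i j h => ha (by omega)) (fun n => ha0 _) _ c hgeo _
      _ ≤ 1 * c := mul_le_mul_of_nonneg_right (le_trans (ha (by omega)) ha1) hcnn
      _ = c := one_mul c
  calc ‖_ + _‖ ≤ _ + _ := norm_add_le _ _
    _ ≤ c + c := add_le_add hneg_part hpos_part
    _ = 4 / ‖z - 1‖ := by rw [hc]; ring

lemma sum_update_apply {ι α M : Type*} [Fintype ι] [DecidableEq ι] [AddCommMonoid M]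
    (i₀ : ι) (y : ι → α) (n : α) (F : ι → α → M) :
    ∑ i, F i (Function.update y i₀ n i) = F i₀ n + ∑ i ∈ Finset.univ.erase i₀, F i (y i) := by
  rw [← Finset.add_sum_erase _ _ (Finset.mem_univ i₀), Function.update_self]
  congr 1
  refine Finset.sum_congr rfl fun j hj => ?_
  rw [Function.update_of_ne (Finset.mem_erase.mp hj).1]

lemma norm_exp_two_pi_I_mul (r : ℝ) : ‖Complex.exp (2 * (π:ℂ) * Complex.I * (r:ℂ))‖ = 1 := by
  rw [Complex.norm_exp]
  have : (2 * (π:ℂ) * Complex.I * (r:ℂ)).re = 0 := by simp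
  rw [this, Real.exp_zero]

lemma fiber_bound (d : ℕ) (δ : ℝ) (hδ : 0 < δ) (N : ℕ) (hN : 1 ≤ N) (x : Fin d → ℝ)
    (i₀ : Fin d) (z : ℂ) (hz1 : ‖z‖ = 1) (hz : z ≠ 1)
    (hzdef : z = Complex.exp (2 * (π:ℂ) * Complex.I * (x i₀ : ℂ)))
    (y : Fin d → ℤ) (hy0 : y i₀ = 0) (hybox : ∀ j, y j ∈ Finset.Icc (-(N:ℤ)) (N:ℤ)) :
    ‖∑ k ∈ ((Fintype.piFinset fun _ : Fin d => Finset.Icc (-(N : ℤ)) (N : ℤ)).filter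
        (fun k => ∑ i, (k i) ^ 2 ≤ (N : ℤ) ^ 2)).filter
        (fun k => Function.update k i₀ 0 = y),
      (((1 - (∑ i, ((k i : ℝ)) ^ 2) / (N : ℝ) ^ 2) ^ δ : ℝ) : ℂ) *
        Complex.exp (2 * (π : ℂ) * Complex.I * (∑ i, (k i : ℝ) * x i))‖ ≤ 4 / ‖z - 1‖ := by
  have hpos : 0 < ‖z - 1‖ := by rw [norm_pos_iff]; exact sub_ne_zero.mpr hz
  set R : ℤ := ∑ i, (y i)^2 with hR
  have hR0 : 0 ≤ R := Finset.sum_nonneg fun i _ => sq_nonneg _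
  have hRerase : ∑ i ∈ Finset.univ.erase i₀, (y i)^2 = R := by
    rw [hR, ← Finset.add_sum_erase _ _ (Finset.mem_univ i₀), hy0]
    ring
  have hsq : ∀ n : ℤ, ∑ i, (Function.update y i₀ n i)^2 = n^2 + R := by
    intro n
    rw [sum_update_apply i₀ y n (fun _ v => v^2), hRerase]
  set c₀ : ℝ := ∑ i ∈ Finset.univ.erase i₀, (y i : ℝ) * x i with hc₀
  have hlin : ∀ n : ℤ, ∑ i, ((Function.update y i₀ n i : ℤ) : ℝ) * x i
      = (n:ℝ) * x i₀ + c₀ := by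
    intro n
    exact sum_update_apply i₀ y n (fun i v => (v:ℝ) * x i)
  -- Step A: the fiber is an image
  have hinj : ∀ p ∈ ((Finset.Icc (-(N:ℤ)) (N:ℤ)).filter (fun n => R + n^2 ≤ (N:ℤ)^2)),
      ∀ q ∈ ((Finset.Icc (-(N:ℤ)) (N:ℤ)).filter (fun n => R + n^2 ≤ (N:ℤ)^2)),
      Function.update y i₀ p = Function.update y i₀ q → p = q := by
    intro p _ q _ h
    have := congrFun h i₀
    simpa using this
  have himage : ((Fintype.piFinset fun _ : Fin d => Finset.Icc (-(N : ℤ)) (N : ℤ)).filter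
        (fun k => ∑ i, (k i) ^ 2 ≤ (N : ℤ) ^ 2)).filter
        (fun k => Function.update k i₀ 0 = y)
      = ((Finset.Icc (-(N:ℤ)) (N:ℤ)).filter (fun n => R + n^2 ≤ (N:ℤ)^2)).image
          (fun n => Function.update y i₀ n) := by
    ext k
    simp only [Finset.mem_filter, Fintype.mem_piFinset, Finset.mem_Icc, Finset.mem_image]
    constructor
    · rintro ⟨⟨hbox, hsum⟩, hupd⟩
      have hk : Function.update y i₀ (k i₀) = k := by
        funext j
        by_cases hj : j = i₀
        · subst hj; simp
        · rw [Function.update_of_ne hj, ← hupd, Function.update_of_ne hj]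
      refine ⟨k i₀, ⟨⟨(hbox i₀).1, (hbox i₀).2⟩, ?_⟩, hk⟩
      have := hsum
      rw [← hk, hsq] at this
      omega
    · rintro ⟨n, ⟨hn, hle⟩, rfl⟩
      refine ⟨⟨?_, ?_⟩, ?_⟩
      · intro j
        by_cases hj : j = i₀
        · subst hj; simpa using hn
        · rw [Function.update_of_ne hj]
          simpa using hybox j
      · rw [hsq]; omega
      · funext j
        by_cases hj : j = i₀
        · subst hj; simp [hy0]
        · rw [Function.update_of_ne hj, Function.update_of_ne hj]
    
  rw [himage, Finset.sum_image hinj]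
  -- Step B: the index set is a symmetric interval (or empty)
  by_cases hT : (N:ℤ)^2 - R < 0
  · have : (Finset.Icc (-(N:ℤ)) (N:ℤ)).filter (fun n => R + n^2 ≤ (N:ℤ)^2) = ∅ := by
      rw [Finset.filter_eq_empty_iff]
      intro n _ h
      nlinarith [sq_nonneg n]
    rw [this, Finset.sum_empty, norm_zero]
    positivity
  push_neg at hT
  set M : ℕ := Nat.sqrt ((N:ℤ)^2 - R).toNat with hM
  have hfilter : (Finset.Icc (-(N:ℤ)) (N:ℤ)).filter (fun n => R + n^2 ≤ (N:ℤ)^2)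
      = Finset.Icc (-(M:ℤ)) (M:ℤ) := by
    ext n
    simp only [Finset.mem_filter, Finset.mem_Icc]
    constructor
    · rintro ⟨⟨h1, h2⟩, h3⟩
      have hnat : n.natAbs * n.natAbs ≤ ((N:ℤ)^2 - R).toNat := by
        have hcast : ((n.natAbs * n.natAbs : ℕ) : ℤ) ≤ (((N:ℤ)^2 - R).toNat : ℤ) := by
          rw [Int.toNat_of_nonneg hT]
          push_cast
          rw [abs_mul_abs_self]
          nlinarith
        exact_mod_cast hcast
      have := Nat.le_sqrt.mpr hnat
      omega
    · rintro ⟨h1, h2⟩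
      have habs : n.natAbs ≤ M := by omega
      have hmul : (n.natAbs * n.natAbs : ℕ) ≤ ((N:ℤ)^2 - R).toNat :=
        le_trans (Nat.mul_le_mul habs habs) (by rw [← pow_two]; exact Nat.sqrt_le' _)
      have hsqle : n^2 ≤ (N:ℤ)^2 - R := by
        have : ((n.natAbs * n.natAbs : ℕ) : ℤ) ≤ (((N:ℤ)^2 - R).toNat : ℤ) := by
          exact_mod_cast hmul
        rw [Int.toNat_of_nonneg hT] at this
        push_cast at this
        rw [abs_mul_abs_self] at this
        nlinarith
      have hN2 : n^2 ≤ (N:ℤ)^2 := by omega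
      refine ⟨⟨?_, ?_⟩, by omega⟩
      · nlinarith
      · nlinarith
  rw [hfilter]
  -- Step C: rewrite the summand and apply the 1-D bound
  set E : ℂ := Complex.exp (2 * (π:ℂ) * Complex.I * (c₀ : ℂ)) with hE
  set a : ℕ → ℝ := fun j => (max 0 (1 - (((j:ℝ))^2 + (R:ℝ)) / (N:ℝ)^2)) ^ δ with ha
  have hNR : (0:ℝ) < (N:ℝ)^2 := by positivity
  have hsummand : ∀ n ∈ Finset.Icc (-(M:ℤ)) (M:ℤ),
      (((1 - (∑ i, ((Function.update y i₀ n i : ℤ) : ℝ) ^ 2) / (N : ℝ) ^ 2) ^ δ : ℝ) : ℂ) *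
        Complex.exp (2 * (π : ℂ) * Complex.I * (∑ i, ((Function.update y i₀ n i : ℤ) : ℝ) * x i))
      = E * ((a n.natAbs : ℂ) * z ^ n) := by
    intro n hn
    have hmem : R + n^2 ≤ (N:ℤ)^2 := by
      have : n ∈ (Finset.Icc (-(N:ℤ)) (N:ℤ)).filter (fun n => R + n^2 ≤ (N:ℤ)^2) := by
        rw [hfilter]; exact hn
      exact (Finset.mem_filter.mp this).2
    have hsumsq : ∑ i, ((Function.update y i₀ n i : ℤ) : ℝ) ^ 2 = (n:ℝ)^2 + (R:ℝ) := by
      have := hsq n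
      push_cast [← this]
      norm_cast
    have hbase : (1 : ℝ) - ((n:ℝ)^2 + (R:ℝ)) / (N:ℝ)^2
        = max 0 (1 - (((n.natAbs:ℝ))^2 + (R:ℝ)) / (N:ℝ)^2) := by
      have hc : ((n.natAbs:ℝ))^2 = (n:ℝ)^2 := by
        rw [Nat.cast_natAbs]
        push_cast
        exact sq_abs _
      rw [hc, max_eq_right]
      rw [sub_nonneg, div_le_one hNR]
      have : ((R + n^2 : ℤ) : ℝ) ≤ (((N:ℤ)^2 : ℤ) : ℝ) := by exact_mod_cast hmem
      push_cast at this
      linarith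
    have hexp : Complex.exp (2 * (π : ℂ) * Complex.I *
          (∑ i, ((Function.update y i₀ n i : ℤ) : ℝ) * x i : ℝ)) = E * z ^ n := by
      rw [hlin n, hE, hzdef]
      push_cast
      rw [show 2 * (π:ℂ) * Complex.I * ((n:ℂ) * (x i₀ : ℂ) + (c₀:ℂ))
          = 2 * (π:ℂ) * Complex.I * (c₀:ℂ) + (n:ℤ) * (2 * (π:ℂ) * Complex.I * (x i₀:ℂ)) by
        push_cast; ring]
      rw [Complex.exp_add, Complex.exp_int_mul]
    rw [hsumsq, hbase, hexp, ha]
    ring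
  rw [Finset.sum_congr rfl hsummand, ← Finset.mul_sum, norm_mul, hE, norm_exp_two_pi_I_mul,
    one_mul]
  apply symm_sum_bound z hz1 hz a
  · intro i j hij
    apply Real.rpow_le_rpow (le_max_left 0 _) _ hδ.le
    apply max_le_max (le_refl (0:ℝ))
    have : ((i:ℝ))^2 ≤ ((j:ℝ))^2 := by
      have : (i:ℝ) ≤ (j:ℝ) := by exact_mod_cast hij
      nlinarith [Nat.cast_nonneg (α := ℝ) i]
    have hdiv : (((i:ℝ))^2 + (R:ℝ)) / (N:ℝ)^2 ≤ (((j:ℝ))^2 + (R:ℝ)) / (N:ℝ)^2 :=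
      (div_le_div_iff_of_pos_right hNR).mpr (by linarith)
    linarith
  · intro n
    exact Real.rpow_nonneg (le_max_left 0 _) δ
  · apply Real.rpow_le_one (le_max_left 0 _) _ hδ.le
    apply max_le (by norm_num)
    have : (0:ℝ) ≤ (((0:ℕ):ℝ)^2 + (R:ℝ)) / (N:ℝ)^2 := by positivity
    linarith

end Aux

/-- **Growth bound for the Bochner–Riesz kernel on `𝕋^d`.** For `δ > 0` and
`x ∈ ℝ^d \ ℤ^d` there is a constant `C(x,d,δ)`, independent of `N`, such that
`|B_N^{d,δ}(x)| ≤ C(x,d,δ) N^{d-1}` for all `N ≥ 1`. -/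
theorem bochnerRieszKernel_bound (d : ℕ) (δ : ℝ) (hδ : 0 < δ) (x : Fin d → ℝ)
    (hx : ¬ ∀ i, ∃ n : ℤ, x i = n) :
    ∃ C : ℝ, ∀ N : ℕ, 1 ≤ N →
      ‖bochnerRieszKernel d δ N x‖ ≤ C * (N : ℝ) ^ (d - 1) := by
  push_neg at hx
  obtain ⟨i₀, hi₀⟩ := hx
  set z : ℂ := Complex.exp (2 * (π:ℂ) * Complex.I * (x i₀ : ℂ)) with hzdef
  have hz1 : ‖z‖ = 1 := norm_exp_two_pi_I_mul (x i₀)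
  have hz : z ≠ 1 := by
    intro h
    rw [hzdef, Complex.exp_eq_one_iff] at h
    obtain ⟨n, hn⟩ := h
    have h2 : (2 * (π:ℂ) * Complex.I) ≠ 0 := by
      simp [Real.pi_ne_zero, Complex.I_ne_zero]
    have : (x i₀ : ℂ) = (n : ℂ) := by
      apply mul_left_cancel₀ h2
      rw [hn]; ring
    exact hi₀ n (by exact_mod_cast this)
  have hpos : 0 < ‖z - 1‖ := by rw [norm_pos_iff]; exact sub_ne_zero.mpr hz
  refine ⟨4 / ‖z - 1‖ * 3 ^ (d - 1), fun N hN => ?_⟩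
  rw [bochnerRieszKernel]
  set t := Fintype.piFinset
      (fun j : Fin d => if j = i₀ then ({0} : Finset ℤ) else Finset.Icc (-(N:ℤ)) (N:ℤ)) with ht
  have hmaps : ∀ k ∈ (Fintype.piFinset fun _ : Fin d => Finset.Icc (-(N : ℤ)) (N : ℤ)).filter
      (fun k => ∑ i, (k i) ^ 2 ≤ (N : ℤ) ^ 2), Function.update k i₀ 0 ∈ t := by
    intro k hk
    rw [ht, Fintype.mem_piFinset]
    intro j
    by_cases hj : j = i₀
    · subst hj; simp
    · rw [if_neg hj, Function.update_of_ne hj]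
      exact Fintype.mem_piFinset.mp (Finset.mem_filter.mp hk).1 j
  rw [← Finset.sum_fiberwise_of_maps_to hmaps]
  have hcard : t.card = (2*N+1)^(d-1) := by
    rw [ht, Fintype.card_piFinset]
    have hc : ∀ j : Fin d,
        ((if j = i₀ then ({0}:Finset ℤ) else Finset.Icc (-(N:ℤ)) (N:ℤ))).card
          = if j = i₀ then 1 else (2*N+1) := by
      intro j
      split
      · simp
      · rw [Int.card_Icc]; omega
    rw [Finset.prod_congr rfl (fun j _ => hc j),
      ← Finset.mul_prod_erase _ _ (Finset.mem_univ i₀), if_pos rfl, one_mul,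
      Finset.prod_congr rfl (fun j hj => if_neg (Finset.mem_erase.mp hj).1),
      Finset.prod_const, Finset.card_erase_of_mem (Finset.mem_univ i₀), Finset.card_univ,
      Fintype.card_fin]
  calc ‖∑ y ∈ t, ∑ k ∈ _, _‖ ≤ ∑ y ∈ t, ‖∑ k ∈ _, _‖ := norm_sum_le _ _
    _ ≤ ∑ y ∈ t, (4 / ‖z - 1‖) := by
        refine Finset.sum_le_sum fun y hy => ?_
        have hy' := Fintype.mem_piFinset.mp (ht ▸ hy)
        have hy0 : y i₀ = 0 := by have := hy' i₀; simpa using this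
        have hybox : ∀ j, y j ∈ Finset.Icc (-(N:ℤ)) (N:ℤ) := by
          intro j
          by_cases hj : j = i₀
          · subst hj
            rw [hy0, Finset.mem_Icc]
            constructor <;> [omega; omega]
          · have := hy' j; rwa [if_neg hj] at this
        exact fiber_bound d δ hδ N hN x i₀ z hz1 hz hzdef y hy0 hybox
    _ = (t.card : ℝ) * (4 / ‖z - 1‖) := by rw [Finset.sum_const, nsmul_eq_mul]
    _ ≤ 4 / ‖z - 1‖ * 3 ^ (d - 1) * (N : ℝ) ^ (d - 1) := by
        rw [hcard]
        push_cast
        have h1 : ((2*N+1 : ℝ)) ^ (d-1) ≤ (3 * (N:ℝ)) ^ (d-1) := by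
          apply pow_le_pow_left₀ (by positivity)
          have : (1:ℝ) ≤ (N:ℝ) := by exact_mod_cast hN
          linarith
        calc ((2*(N:ℝ)+1)) ^ (d-1) * (4 / ‖z - 1‖)
            ≤ (3 * (N:ℝ)) ^ (d-1) * (4 / ‖z - 1‖) := by
              apply mul_le_mul_of_nonneg_right h1 (by positivity)
          _ = 4 / ‖z - 1‖ * 3 ^ (d - 1) * (N : ℝ) ^ (d - 1) := by
              rw [mul_pow]; ring
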